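/- Let agents have {−1,0,c}-additive valuations for a positive integer c. Then every leximin allocation is envy-free up to one item (EF1): for any two agents i, j there exists an item o ∈ X_i ∪ X_j such that v_i(X_i − o) ≥ v_i(X_j − o). -/

import Mathlib

open Finset

/-- Additive utility of a bundle given per-item values. -/
def util {α : Type*} [DecidableEq α] (w : α → ℤ) (S : Finset α) : ℤ := ∑ o ∈ S, w o

/-- A complete allocation: bundles are pairwise disjoint and cover all items. -/
def CompleteAlloc {α : Type*} [Fintype α] [DecidableEq α] {n : ℕ}
    (X : Fin n → Finset α) : Prop :=
  (∀ i j : Fin n, i ≠ j → Disjoint (X i) (X j)) ∧ Finset.univ.biUnion X = Finset.univ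

/-- The ascending-sorted utility vector of an allocation. -/
noncomputable def sUtil {α : Type*} [Fintype α] [DecidableEq α] {n : ℕ}
    (value : Fin n → α → ℤ) (X : Fin n → Finset α) : List ℤ :=
  Multiset.sort (Multiset.map (fun i => util (value i) (X i)) Finset.univ.val) (· ≤ ·)

/-- A leximin allocation: a complete allocation whose sorted utility vector is not
lexicographically dominated by that of any other complete allocation. -/
def Leximin {α : Type*} [Fintype α] [DecidableEq α] {n : ℕ}
    (value : Fin n → α → ℤ) (X : Fin n → Finset α) : Prop :=
  CompleteAlloc X ∧ ∀ Y : Fin n → Finset α, CompleteAlloc Y →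
    ¬ List.Lex (· < ·) (sUtil value X) (sUtil value Y)

lemma sorted_lex_of_count (x : ℤ) :
    ∀ (l₁ l₂ : List ℤ), l₁.Pairwise (· ≤ ·) → l₂.Pairwise (· ≤ ·) → l₁.length = l₂.length →
    (∀ y, y < x → l₁.count y = l₂.count y) → l₂.count x < l₁.count x →
    List.Lex (· < ·) l₁ l₂ := by
  intro l₁
  induction l₁ with
  | nil => intro l₂ _ _ _ _ hx; simp at hx
  | cons h₁ t₁ ih =>
    intro l₂ hs₁ hs₂ hlen hlow hx
    match l₂ with
    | [] => simp at hlen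
    | h₂ :: t₂ =>
      rw [List.pairwise_cons] at hs₁ hs₂
      have hh₁x : h₁ ≤ x := by
        by_contra hcon
        push_neg at hcon
        have : x ∉ h₁ :: t₁ := by
          intro hmem
          rcases List.mem_cons.mp hmem with h | h
          · omega
          · exact absurd (hs₁.1 x h) (by omega)
        simp [List.count_eq_zero_of_not_mem this] at hx
      rcases lt_trichotomy h₁ h₂ with hlt | heq | hgt
      · exact List.Lex.rel hlt
      · subst heq
        apply List.Lex.cons
        apply ih t₂ hs₁.2 hs₂.2 (by simpa using hlen)
        · intro y hy
          have := hlow y hy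
          simp only [List.count_cons] at this ⊢
          first
          | omega
          | (split_ifs at this ⊢ <;> omega)
        · simp only [List.count_cons] at hx
          first
          | omega
          | (split_ifs at hx <;> omega)
      · have hlt2 : h₂ < x := lt_of_lt_of_le hgt hh₁x
        have heq := hlow h₂ hlt2
        have h1 : (h₁ :: t₁).count h₂ = 0 := by
          apply List.count_eq_zero_of_not_mem
          intro hmem
          rcases List.mem_cons.mp hmem with h | h
          · omega
          · exact absurd (hs₁.1 h₂ h) (by omega)
        have h2 : 0 < (h₂ :: t₂).count h₂ := by
          simp [List.count_cons]
        omega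

lemma lex_improve (M : Multiset ℤ) (a b a' b' : ℤ)
    (h : min a b < min a' b' ∨ (a ≤ a' ∧ b ≤ b' ∧ ¬(a' = a ∧ b' = b))) :
    List.Lex (· < ·) (Multiset.sort (a ::ₘ b ::ₘ M) (· ≤ ·))
      (Multiset.sort (a' ::ₘ b' ::ₘ M) (· ≤ ·)) := by
  have hc : ∀ (y : ℤ) (s : Multiset ℤ), (Multiset.sort s (· ≤ ·)).count y = s.count y := by
    intro y s
    rw [← Multiset.coe_count, Multiset.sort_eq]
  obtain ⟨x, hlow, hstrict⟩ :
      ∃ x : ℤ, (∀ y, y < x → Multiset.count y (a ::ₘ b ::ₘ M) = Multiset.count y (a' ::ₘ b' ::ₘ M)) ∧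
        Multiset.count x (a' ::ₘ b' ::ₘ M) < Multiset.count x (a ::ₘ b ::ₘ M) := by
    have hmin : min a b < min a' b' ∨ (a < a' ∧ b' = b) ∨ (a' = a ∧ b < b') := by
      rcases h with h | ⟨h1, h2, h3⟩
      · exact Or.inl h
      · rcases h1.lt_or_eq with h1 | h1 <;> rcases h2.lt_or_eq with h2 | h2
        · exact Or.inl (lt_min (lt_of_le_of_lt (min_le_left a b) h1)
            (lt_of_le_of_lt (min_le_right a b) h2))
        · exact Or.inr (Or.inl ⟨h1, h2.symm⟩)
        · exact Or.inr (Or.inr ⟨h1.symm, h2⟩)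
        · exact absurd ⟨h1.symm, h2.symm⟩ h3
    rcases hmin with hm | ⟨h1, h2⟩ | ⟨h1, h2⟩
    · refine ⟨min a b, ?_, ?_⟩
      · have ha' : min a b < a' := lt_of_lt_of_le hm (min_le_left _ _)
        have hb' : min a b < b' := lt_of_lt_of_le hm (min_le_right _ _)
        have ha : min a b ≤ a := min_le_left _ _
        have hb : min a b ≤ b := min_le_right _ _
        intro y hy
        simp only [Multiset.count_cons]
        split_ifs <;> omega
      · have ha' : min a b < a' := lt_of_lt_of_le hm (min_le_left _ _)
        have hb' : min a b < b' := lt_of_lt_of_le hm (min_le_right _ _)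
        rcases min_choice a b with hma | hmb
        · simp only [Multiset.count_cons]
          split_ifs <;> omega
        · simp only [Multiset.count_cons]
          split_ifs <;> omega
    · refine ⟨a, ?_, ?_⟩
      · intro y hy
        simp only [Multiset.count_cons]
        split_ifs <;> omega
      · simp only [Multiset.count_cons]
        split_ifs <;> omega
    · refine ⟨b, ?_, ?_⟩
      · intro y hy
        simp only [Multiset.count_cons]
        split_ifs <;> omega
      · simp only [Multiset.count_cons]
        split_ifs <;> omega
  apply sorted_lex_of_count x _ _ (Multiset.pairwise_sort _ _) (Multiset.pairwise_sort _ _)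
  · simp [Multiset.length_sort]
  · intro y hy
    rw [hc, hc]
    exact hlow y hy
  · rw [hc, hc]
    exact hstrict

lemma map_univ_split {n : ℕ} (i j : Fin n) (hij : i ≠ j) (f : Fin n → ℤ) :
    Multiset.map f (univ.val : Multiset (Fin n)) =
      f i ::ₘ f j ::ₘ Multiset.map f (((univ.val : Multiset (Fin n)).erase i).erase j) := by
  have hi : i ∈ (univ.val : Multiset (Fin n)) := Finset.mem_univ i
  have hj : j ∈ (univ.val : Multiset (Fin n)).erase i :=
    (Multiset.mem_erase_of_ne hij.symm).mpr (Finset.mem_univ j)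
  conv_lhs => rw [← Multiset.cons_erase hi, ← Multiset.cons_erase hj]
  simp [Multiset.map_cons]

lemma moveTo_complete {α : Type*} [Fintype α] [DecidableEq α] {n : ℕ}
    (X : Fin n → Finset α) (hX : CompleteAlloc X) (k l : Fin n) (hkl : k ≠ l)
    (o : α) (ho : o ∈ X l) :
    CompleteAlloc (fun m => if m = k then insert o (X k)
      else if m = l then (X l).erase o else X m) := by
  obtain ⟨hdisj, hcov⟩ := hX
  constructor
  · intro m m' hne
    have key : ∀ p : Fin n, p ≠ k → p ≠ l →
        Disjoint (insert o (X k)) (X p) ∧ Disjoint ((X l).erase o) (X p) := by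
      intro p hpk hpl
      constructor
      · rw [Finset.insert_eq, Finset.disjoint_union_left]
        constructor
        · simp only [Finset.disjoint_singleton_left]
          exact Finset.disjoint_left.mp (hdisj l p hpl.symm) ho
        · exact hdisj k p (Ne.symm hpk)
      · exact Finset.disjoint_of_subset_left (Finset.erase_subset o (X l)) (hdisj l p (Ne.symm hpl))
    have hkl' : Disjoint (insert o (X k)) ((X l).erase o) := by
      rw [Finset.insert_eq, Finset.disjoint_union_left]
      constructor
      · simp
      · exact Finset.disjoint_of_subset_right (Finset.erase_subset o (X l)) (hdisj k l hkl)
    by_cases h1 : m = k <;> by_cases h2 : m' = k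
    · exact absurd (h1.trans h2.symm) hne
    · subst h1
      by_cases h3 : m' = l
      · subst h3; simp only [if_neg h2, if_pos rfl, if_neg hkl]
        simpa using hkl'
      · simp only [if_pos rfl, if_neg h2, if_neg h3]
        exact (key m' h2 h3).1
    · subst h2
      by_cases h3 : m = l
      · subst h3; simp only [if_neg h1, if_pos rfl, if_neg hkl]
        exact (Disjoint.symm hkl')
      · simp only [if_pos rfl, if_neg h1, if_neg h3]
        exact ((key m h1 h3).1).symm
    · by_cases h3 : m = l <;> by_cases h4 : m' = l
      · exact absurd (h3.trans h4.symm) hne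
      · subst h3; simp only [if_neg h1, if_neg h2, if_pos rfl, if_neg h4]
        exact (key m' h2 h4).2
      · subst h4; simp only [if_neg h1, if_neg h2, if_pos rfl, if_neg h3]
        exact ((key m h1 h3).2).symm
      · simp only [if_neg h1, if_neg h2, if_neg h3, if_neg h4]
        exact hdisj m m' hne
  · rw [Finset.eq_univ_iff_forall]
    intro x
    have hx : ∃ m, x ∈ X m := by
      have := Finset.eq_univ_iff_forall.mp hcov x
      simpa using this
    obtain ⟨m, hm⟩ := hx
    rw [Finset.mem_biUnion]
    by_cases hxo : x = o
    · exact ⟨k, Finset.mem_univ k, by simp [hxo]⟩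
    · by_cases h1 : m = k
      · refine ⟨k, Finset.mem_univ k, ?_⟩
        simp only [if_pos rfl]
        exact Finset.mem_insert_of_mem (h1 ▸ hm)
      · by_cases h2 : m = l
        · refine ⟨l, Finset.mem_univ l, ?_⟩
          simp only [if_neg hkl.symm, if_pos rfl]
          exact Finset.mem_erase.mpr ⟨hxo, h2 ▸ hm⟩
        · exact ⟨m, Finset.mem_univ m, by simp [if_neg h1, if_neg h2, hm]⟩

lemma no_improving_transfer {α : Type*} [Fintype α] [DecidableEq α] {n : ℕ}
    (value : Fin n → α → ℤ) (X : Fin n → Finset α) (hlex : Leximin value X)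
    (k l : Fin n) (hkl : k ≠ l) (o : α) (ho : o ∈ X l)
    (h : min (util (value k) (X k)) (util (value l) (X l)) <
          min (util (value k) (X k) + value k o) (util (value l) (X l) - value l o)
       ∨ (0 ≤ value k o ∧ value l o ≤ 0 ∧ ¬(value k o = 0 ∧ value l o = 0))) :
    False := by
  obtain ⟨⟨hdisj, hcov⟩, hopt⟩ := hlex
  set Y : Fin n → Finset α := fun m => if m = k then insert o (X k)
      else if m = l then (X l).erase o else X m with hYdef
  have hYc : CompleteAlloc Y := moveTo_complete X ⟨hdisj, hcov⟩ k l hkl o ho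
  have honk : o ∉ X k := Finset.disjoint_left.mp (hdisj l k (Ne.symm hkl)) ho
  have hYk : util (value k) (Y k) = util (value k) (X k) + value k o := by
    simp only [hYdef, if_pos rfl, util]
    rw [Finset.sum_insert honk]
    ring
  have hYl : util (value l) (Y l) = util (value l) (X l) - value l o := by
    simp only [hYdef, if_neg (Ne.symm hkl), if_pos rfl, util]
    exact Finset.sum_erase_eq_sub ho
  have hrest : ∀ m ∈ ((univ.val : Multiset (Fin n)).erase k).erase l, Y m = X m := by
    intro m hm
    have hnd : ((univ.val : Multiset (Fin n)).erase k).Nodup :=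
      (Finset.univ.nodup).erase k
    have h1 : m ≠ l ∧ m ∈ (univ.val : Multiset (Fin n)).erase k :=
      (Multiset.Nodup.mem_erase_iff hnd).mp hm
    have h2 : m ≠ k ∧ m ∈ (univ.val : Multiset (Fin n)) :=
      (Multiset.Nodup.mem_erase_iff Finset.univ.nodup).mp h1.2
    simp only [hYdef, if_neg h2.1, if_neg h1.1]
  have hsX : sUtil value X = Multiset.sort
      (util (value k) (X k) ::ₘ util (value l) (X l) ::ₘ
        Multiset.map (fun m => util (value m) (X m))
          (((univ.val : Multiset (Fin n)).erase k).erase l)) (· ≤ ·) := by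
    unfold sUtil
    rw [map_univ_split k l hkl]
  have hsY : sUtil value Y = Multiset.sort
      ((util (value k) (X k) + value k o) ::ₘ (util (value l) (X l) - value l o) ::ₘ
        Multiset.map (fun m => util (value m) (X m))
          (((univ.val : Multiset (Fin n)).erase k).erase l)) (· ≤ ·) := by
    unfold sUtil
    rw [map_univ_split k l hkl, hYk, hYl,
      Multiset.map_congr rfl (fun m hm => by rw [hrest m hm])]
  apply hopt Y hYc
  rw [hsX, hsY]
  apply lex_improve
  rcases h with h | ⟨h1, h2, h3⟩
  · exact Or.inl h
  · refine Or.inr ⟨by omega, by omega, fun ⟨e1, e2⟩ => h3 ⟨by omega, by omega⟩⟩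

/-- with `{-1, 0, c}`-additive valuations, every leximin allocation is
EF1: for any agents `i, j`, either `i` does not envy `j`, or there is an item
`o ∈ X_i ∪ X_j` with `v_i(X_i - o) ≥ v_i(X_j - o)`. -/
theorem leximin_is_EF1 {α : Type*} [Fintype α] [DecidableEq α]
    (n : ℕ) (c : ℕ) (hc : 0 < c) (value : Fin n → α → ℤ)
    (hval : ∀ i o, value i o ∈ ({-1, 0, (c : ℤ)} : Set ℤ))
    (X : Fin n → Finset α) (hlex : Leximin value X) :
    ∀ i j : Fin n,
      util (value i) (X j) ≤ util (value i) (X i) ∨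
      ∃ o ∈ X i ∪ X j,
        util (value i) ((X j).erase o) ≤ util (value i) ((X i).erase o) := by
  intro i j
  by_contra hcon
  push_neg at hcon
  obtain ⟨henvy, hEF⟩ := hcon
  have hij : i ≠ j := by
    rintro rfl
    exact lt_irrefl _ henvy
  obtain ⟨hdisj, hcov⟩ := hlex.1
  have hval' : ∀ (k : Fin n) (o : α), value k o = -1 ∨ value k o = 0 ∨ value k o = (c : ℤ) := by
    intro k o
    have := hval k o
    simpa [Set.mem_insert_iff] using this
  -- pointwise comparisons
  have step1 : ∀ o ∈ X j, value i o ≤ value j o := by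
    intro o ho
    by_contra hlt
    push_neg at hlt
    refine no_improving_transfer value X hlex i j hij o ho (Or.inr ⟨?_, ?_, ?_⟩)
    · rcases hval' i o with h | h | h <;> rcases hval' j o with h' | h' | h' <;> omega
    · rcases hval' i o with h | h | h <;> rcases hval' j o with h' | h' | h' <;> omega
    · rintro ⟨e1, e2⟩
      omega
  have step1' : ∀ o ∈ X i, value j o ≤ value i o := by
    intro o ho
    by_contra hlt
    push_neg at hlt
    refine no_improving_transfer value X hlex j i hij.symm o ho (Or.inr ⟨?_, ?_, ?_⟩)
    · rcases hval' i o with h | h | h <;> rcases hval' j o with h' | h' | h' <;> omega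
    · rcases hval' i o with h | h | h <;> rcases hval' j o with h' | h' | h' <;> omega
    · rintro ⟨e1, e2⟩
      omega
  have step2 : util (value i) (X j) ≤ util (value j) (X j) := Finset.sum_le_sum step1
  -- EF1 failure rewritten
  have hA : ∀ o ∈ X j, util (value i) (X i) + value i o < util (value i) (X j) := by
    intro o ho
    have honi : o ∉ X i := Finset.disjoint_left.mp (hdisj j i hij.symm) ho
    have := hEF o (Finset.mem_union_right _ ho)
    rw [Finset.erase_eq_of_notMem honi] at this
    have he : util (value i) ((X j).erase o) = util (value i) (X j) - value i o :=
      Finset.sum_erase_eq_sub ho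
    rw [he] at this
    omega
  have hB : ∀ o ∈ X i, util (value i) (X i) - value i o < util (value i) (X j) := by
    intro o ho
    have honj : o ∉ X j := Finset.disjoint_left.mp (hdisj i j hij) ho
    have := hEF o (Finset.mem_union_left _ ho)
    rw [Finset.erase_eq_of_notMem honj] at this
    have he : util (value i) ((X i).erase o) = util (value i) (X i) - value i o :=
      Finset.sum_erase_eq_sub ho
    rw [he] at this
    omega
  by_cases hp : ∃ o ∈ X j, value i o = (c : ℤ)
  · obtain ⟨o, ho, hvo⟩ := hp
    have hvjo : value j o = (c : ℤ) := by
      have := step1 o ho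
      rcases hval' j o with h | h | h <;> omega
    have hkey : util (value i) (X i) + c < util (value j) (X j) := by
      have := hA o ho
      omega
    refine no_improving_transfer value X hlex i j hij o ho (Or.inl ?_)
    rw [hvo, hvjo]
    have hmin : min (util (value i) (X i)) (util (value j) (X j)) = util (value i) (X i) := by
      apply min_eq_left
      omega
    rw [hmin]
    apply lt_min <;> omega
  · push_neg at hp
    have hnonpos : ∀ o ∈ X j, value i o ≤ 0 := by
      intro o ho
      have := hp o ho
      rcases hval' i o with h | h | h <;> omega
    have hEnp : util (value i) (X j) ≤ 0 := Finset.sum_nonpos hnonpos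
    obtain ⟨o, ho, hneg⟩ : ∃ o ∈ X i, value i o < 0 := by
      by_contra hno
      push_neg at hno
      have : (0:ℤ) ≤ util (value i) (X i) := Finset.sum_nonneg hno
      omega
    have hvio : value i o = -1 := by
      rcases hval' i o with h | h | h <;> omega
    have hvjo : value j o = -1 := by
      have := step1' o ho
      rcases hval' j o with h | h | h <;> omega
    have hkey : util (value i) (X i) + 1 < util (value j) (X j) := by
      have := hB o ho
      omega
    refine no_improving_transfer value X hlex j i hij.symm o ho (Or.inl ?_)
    rw [hvjo, hvio]
    have hmin : min (util (value j) (X j)) (util (value i) (X i)) = util (value i) (X i) := by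
      apply min_eq_right
      omega
    rw [hmin]
    apply lt_min <;> omega
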